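/- arXiv:1310.1843 — 4 statements merged into one kernel-verified Lean document; each statement's English description precedes it below -/
import Mathlib

section
/- Let A = K[u_0, u_1, ...] be the polynomial ring in countably many variables over a field K of characteristic zero, with derivation ∂ given by ∂(u_n) = u_{n+1}, and let σ be the automorphism with σ(u_n) = -u_n. Then the fixed subalgebra A^σ is not finitely generated as a differential algebra: there is no finite subset X of A^σ such that A^σ is generated as a K-algebra by all iterated derivatives ∂^k(x) of elements x ∈ X. -/
open MvPolynomial

section Aux

variable {K : Type*} [Field K]

lemma degAux_add (a b : ℕ →₀ ℕ) :
    Finsupp.degree (a + b) = Finsupp.degree a + Finsupp.degree b := by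
  simp [Finsupp.degree_eq_weight_one, map_add]

lemma wtAux_add (a b : ℕ →₀ ℕ) :
    Finsupp.weight id (a + b) = Finsupp.weight id a + Finsupp.weight id b := map_add _ _ _

lemma degAux_single (i k : ℕ) : Finsupp.degree (Finsupp.single i k) = k := by
  simp [Finsupp.degree_eq_weight_one, Finsupp.weight_apply, Finsupp.sum_single_index]

lemma wtAux_single (i k : ℕ) : Finsupp.weight id (Finsupp.single i k) = k * i := by
  simp [Finsupp.weight_apply, Finsupp.sum_single_index]

/-- The derivation `∂` with `∂(uₙ) = u_{n+1}`. -/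
noncomputable abbrev mkD (K : Type*) [Field K] :
    Derivation K (MvPolynomial ℕ K) (MvPolynomial ℕ K) :=
  mkDerivation K (fun n => X (n+1))

/-- Support of the derivation of a polynomial: degrees preserved, weights shifted by 1. -/
lemma support_mkD (p : MvPolynomial ℕ K) :
    ∀ e ∈ (mkD K p).support,
      ∃ d ∈ p.support, Finsupp.degree e = Finsupp.degree d ∧
        Finsupp.weight id e = Finsupp.weight id d + 1 := by
  classical
  intro e he
  conv at he => rw [p.as_sum, map_sum]
  obtain ⟨d, hd, he⟩ := Finset.mem_biUnion.mp (MvPolynomial.support_sum he)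
  refine ⟨d, hd, ?_⟩
  rw [mkDerivation_monomial] at he
  rw [MvPolynomial.support_smul_eq (by simpa using (mem_support_iff.mp hd))] at he
  unfold Finsupp.sum at he
  obtain ⟨i, hi, he⟩ := Finset.mem_biUnion.mp (MvPolynomial.support_sum he)
  have hsm : (monomial (d - Finsupp.single i 1) ((d i : K))) • (X (i+1) : MvPolynomial ℕ K)
      = monomial (d - Finsupp.single i 1 + Finsupp.single (i+1) 1) (d i : K) := by
    rw [smul_eq_mul, X, monomial_mul, mul_one]
  dsimp only at he
  rw [hsm] at he
  have he' : e = d - Finsupp.single i 1 + Finsupp.single (i+1) 1 := by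
    by_contra hne
    apply mem_support_iff.mp he
    rw [coeff_monomial]
    exact if_neg fun h => hne h.symm
  have hle : Finsupp.single i 1 ≤ d := by
    rw [Finsupp.single_le_iff]
    exact Nat.one_le_iff_ne_zero.mpr (Finsupp.mem_support_iff.mp hi)
  have hcan : d - Finsupp.single i 1 + Finsupp.single i 1 = d := tsub_add_cancel_of_le hle
  constructor
  · have h1 : Finsupp.degree e = Finsupp.degree (d - Finsupp.single i 1) + 1 := by
      rw [he', degAux_add, degAux_single]
    have h2 : Finsupp.degree d = Finsupp.degree (d - Finsupp.single i 1) + 1 := by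
      conv_lhs => rw [← hcan]
      rw [degAux_add, degAux_single]
    omega
  · have h1 : Finsupp.weight id e = Finsupp.weight id (d - Finsupp.single i 1) + (i + 1) := by
      rw [he', wtAux_add, wtAux_single]; ring
    have h2 : Finsupp.weight id d = Finsupp.weight id (d - Finsupp.single i 1) + i := by
      conv_lhs => rw [← hcan]
      rw [wtAux_add, wtAux_single]; ring
    omega

lemma iter_wt_le (x : MvPolynomial ℕ K) (W : ℕ)
    (hW : ∀ d ∈ x.support, Finsupp.weight id d ≤ W) (k : ℕ) :
    ∀ e ∈ ((⇑(mkD K))^[k] x).support, Finsupp.weight id e ≤ W + k := by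
  induction k with
  | zero => simpa using hW
  | succ k ih =>
    intro e he
    rw [Function.iterate_succ_apply'] at he
    obtain ⟨d, hd, -, hw⟩ := support_mkD _ e he
    have := ih d hd
    omega

lemma iter_wt_ge (x : MvPolynomial ℕ K) (k : ℕ) :
    ∀ e ∈ ((⇑(mkD K))^[k] x).support, k ≤ Finsupp.weight id e := by
  induction k with
  | zero => exact fun e _ => Nat.zero_le _
  | succ k ih =>
    intro e he
    rw [Function.iterate_succ_apply'] at he
    obtain ⟨d, hd, -, hw⟩ := support_mkD _ e he
    have := ih d hd
    omega

lemma iter_even (x : MvPolynomial ℕ K)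
    (hx : ∀ d ∈ x.support, Even (Finsupp.degree d)) (k : ℕ) :
    ∀ e ∈ ((⇑(mkD K))^[k] x).support, Even (Finsupp.degree e) := by
  induction k with
  | zero => simpa using hx
  | succ k ih =>
    intro e he
    rw [Function.iterate_succ_apply'] at he
    obtain ⟨d, hd, hdeg, -⟩ := support_mkD _ e he
    exact hdeg ▸ ih d hd

lemma sigma_monomial (d : ℕ →₀ ℕ) (c : K) :
    aeval (fun n => -(X n : MvPolynomial ℕ K)) (monomial d c)
      = monomial d ((-1 : K)^(Finsupp.degree d) * c) := by
  rw [aeval_monomial]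
  have h1 : (d.prod fun n e => (-(X n) : MvPolynomial ℕ K) ^ e)
      = (d.prod fun n e => ((-1 : MvPolynomial ℕ K)) ^ e) * d.prod fun n e => (X n) ^ e := by
    rw [← Finsupp.prod_mul]
    exact Finsupp.prod_congr fun n _ => by rw [← neg_one_mul, mul_pow]
  rw [h1]
  have h2 : (d.prod fun n e => ((-1 : MvPolynomial ℕ K)) ^ e)
      = (-1 : MvPolynomial ℕ K) ^ (Finsupp.degree d) := by
    rw [Finsupp.prod, Finset.prod_pow_eq_pow_sum]; rfl
  rw [h2, monomial_eq, algebraMap_eq, C_mul]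
  have : ((-1 : MvPolynomial ℕ K)) ^ d.degree = C ((-1:K) ^ d.degree) := by
    rw [map_pow, map_neg, map_one]
  rw [this]; ring

lemma coeff_sigma (x : MvPolynomial ℕ K) (d : ℕ →₀ ℕ) :
    coeff d (aeval (fun n => -(X n : MvPolynomial ℕ K)) x)
      = (-1 : K)^(Finsupp.degree d) * coeff d x := by
  conv_lhs => rw [x.as_sum, map_sum]
  rw [coeff_sum]
  simp_rw [sigma_monomial, coeff_monomial]
  rw [Finset.sum_ite_eq' x.support d fun d' => (-1:K)^(Finsupp.degree d') * coeff d' x]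
  by_cases h : d ∈ x.support
  · rw [if_pos h]
  · rw [if_neg h, notMem_support_iff.mp h, mul_zero]

lemma even_of_fixed [CharZero K] (x : MvPolynomial ℕ K)
    (h : aeval (fun n => -(X n : MvPolynomial ℕ K)) x = x) :
    ∀ d ∈ x.support, Even (Finsupp.degree d) := by
  intro d hd
  by_contra hodd
  have h1 : coeff d x = -coeff d x := by
    conv_lhs => rw [← h, coeff_sigma, (Nat.not_even_iff_odd.mp hodd).neg_one_pow, neg_one_mul]
  have h2 : (2 : K) * coeff d x = 0 := by
    rw [two_mul]
    rw [eq_neg_iff_add_eq_zero] at h1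
    linear_combination h1
  exact mem_support_iff.mp hd ((mul_eq_zero.mp h2).resolve_left two_ne_zero)

lemma even_mul_even {a b : MvPolynomial ℕ K}
    (ha : ∀ d ∈ a.support, Even (Finsupp.degree d))
    (hb : ∀ d ∈ b.support, Even (Finsupp.degree d)) :
    ∀ d ∈ (a * b).support, Even (Finsupp.degree d) := by
  classical
  intro d hd
  obtain ⟨da, hda, db, hdb, rfl⟩ := Finset.mem_add.mp (support_mul a b hd)
  rw [degAux_add]
  exact (ha da hda).add (hb db hdb)

lemma coeff_mul_even {a b : MvPolynomial ℕ K}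
    (ha : ∀ d ∈ a.support, Even (Finsupp.degree d))
    (hb : ∀ d ∈ b.support, Even (Finsupp.degree d))
    (m0 : ℕ →₀ ℕ) (hm : Finsupp.degree m0 = 2) :
    coeff m0 (a * b) = coeff 0 a * coeff m0 b + coeff m0 a * coeff 0 b := by
  classical
  rw [coeff_mul]
  have hm0 : m0 ≠ 0 := fun h => by simp [h] at hm
  have hsub : ({((0 : ℕ →₀ ℕ), m0), (m0, (0 : ℕ →₀ ℕ))} : Finset _) ⊆ Finset.HasAntidiagonal.antidiagonal m0 := by
    intro p hp
    rcases Finset.mem_insert.mp hp with h | h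
    · rw [h]; simp [Finset.HasAntidiagonal.mem_antidiagonal]
    · rw [Finset.mem_singleton.mp h]; simp [Finset.HasAntidiagonal.mem_antidiagonal]
  rw [← Finset.sum_subset hsub ?z]
  · rw [Finset.sum_insert (by simp [hm0]), Finset.sum_singleton]
  case z =>
    intro p hp hnp
    have hsum : p.1 + p.2 = m0 := Finset.HasAntidiagonal.mem_antidiagonal.mp hp
    have hdeg : Finsupp.degree p.1 + Finsupp.degree p.2 = 2 := by
      rw [← degAux_add, hsum, hm]
    by_cases h1 : Finsupp.degree p.1 = 0
    · exfalso
      apply hnp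
      have : p.1 = 0 := (Finsupp.degree_eq_zero_iff _).mp h1
      simp [Prod.ext_iff, this, ← hsum]
    by_cases h2 : Finsupp.degree p.2 = 0
    · exfalso
      apply hnp
      have : p.2 = 0 := (Finsupp.degree_eq_zero_iff _).mp h2
      simp [Prod.ext_iff, this, ← hsum]
    have hd1 : Finsupp.degree p.1 = 1 := by omega
    have : coeff p.1 a = 0 := by
      by_contra hc
      have := ha p.1 (mem_support_iff.mpr hc)
      rw [hd1] at this
      exact (Nat.not_even_iff_odd.mpr odd_one) this
    rw [this, zero_mul]

lemma adjoin_even_span {G : Set (MvPolynomial ℕ K)}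
    (hG : ∀ g ∈ G, ∀ d ∈ g.support, Even (Finsupp.degree d))
    {ι : Type*} [Fintype ι] (m : ι → (ℕ →₀ ℕ)) (hm : ∀ i, Finsupp.degree (m i) = 2)
    {a : MvPolynomial ℕ K} (ha : a ∈ Algebra.adjoin K G) :
    (∀ d ∈ a.support, Even (Finsupp.degree d)) ∧
      (fun i => coeff (m i) a) ∈
        Submodule.span K ((fun g => fun i => coeff (m i) g) '' G) := by
  classical
  induction ha using Algebra.adjoin_induction with
  | mem x hx => exact ⟨hG x hx, Submodule.subset_span ⟨x, hx, rfl⟩⟩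
  | algebraMap r =>
    constructor
    · intro d hd
      have : d = 0 := by
        by_contra h
        exact mem_support_iff.mp hd (by rw [algebraMap_eq, coeff_C, if_neg (Ne.symm h)])
      simp [this]
    · have : (fun i => coeff (m i) ((algebraMap K (MvPolynomial ℕ K)) r)) = 0 := by
        funext i
        have : m i ≠ 0 := by
          intro h
          have h2 := hm i
          rw [h, map_zero] at h2
          omega
        rw [algebraMap_eq, coeff_C, if_neg (fun h => this h.symm)]
        rfl
      rw [this]; exact Submodule.zero_mem _
  | add x y hx hy ihx ihy =>
    refine ⟨?_, ?_⟩
    · intro d hd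
      rcases Finset.mem_union.mp (Finsupp.support_add hd) with h | h
      · exact ihx.1 d h
      · exact ihy.1 d h
    · have : (fun i => coeff (m i) (x + y))
          = (fun i => coeff (m i) x) + fun i => coeff (m i) y := by
        funext i; simp [coeff_add]
      rw [this]; exact Submodule.add_mem _ ihx.2 ihy.2
  | mul x y hx hy ihx ihy =>
    refine ⟨even_mul_even ihx.1 ihy.1, ?_⟩
    have : (fun i => coeff (m i) (x * y))
        = coeff 0 x • (fun i => coeff (m i) y) + coeff 0 y • fun i => coeff (m i) x := by
      funext i
      simp only [Pi.add_apply, Pi.smul_apply, smul_eq_mul]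
      rw [coeff_mul_even ihx.1 ihy.1 (m i) (hm i)]
      ring
    rw [this]
    exact Submodule.add_mem _ (Submodule.smul_mem _ _ ihy.2) (Submodule.smul_mem _ _ ihx.2)

end Aux

/-- Let `A = K[u₀, u₁, …]` over a field `K` of characteristic zero, with derivation `∂`
determined by `∂(uₙ) = u_{n+1}`, and let `σ` be the automorphism with `σ(uₙ) = -uₙ`.
Then the fixed subalgebra `Aᵠ` is not finitely generated as a differential algebra:
there is no finite subset `S ⊆ Aᵠ` such that `Aᵠ` is generated as a `K`-algebra by all
iterated derivatives `∂ᵏ(x)`, `x ∈ S`. -/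
theorem fixed_subalgebra_not_differentially_finitely_generated
    (K : Type*) [Field K] [CharZero K]
    (σ : MvPolynomial ℕ K →ₐ[K] MvPolynomial ℕ K)
    (hσ : σ = aeval fun n : ℕ => -(X n : MvPolynomial ℕ K))
    (D : Derivation K (MvPolynomial ℕ K) (MvPolynomial ℕ K))
    (hD : ∀ n : ℕ, D (X n) = X (n + 1)) :
    ¬ ∃ S : Finset (MvPolynomial ℕ K),
        (∀ x ∈ S, σ x = x) ∧
        (∀ a : MvPolynomial ℕ K,
          a ∈ Algebra.adjoin K
              {y : MvPolynomial ℕ K | ∃ x ∈ S, ∃ k : ℕ, y = (⇑D)^[k] x}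
            ↔ σ a = a) := by
  classical
  subst hσ
  rintro ⟨S, hS, hiff⟩
  have hDeq : ⇑D = ⇑(mkD K) := by
    have : D = mkD K := derivation_ext fun i => by rw [hD, mkDerivation_X]
    rw [this]
  -- weight bound for elements of S
  set W0 := S.sup (fun x => x.support.sup (Finsupp.weight id)) with hW0def
  have hW0 : ∀ x ∈ S, ∀ d ∈ x.support, Finsupp.weight id d ≤ W0 :=
    fun x hx d hd => le_trans (Finset.le_sup hd)
      (Finset.le_sup (f := fun x : MvPolynomial ℕ K => x.support.sup (Finsupp.weight id)) hx)
  set C := (S.card + 1) * (W0 + 1) with hCdef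
  have hCW : W0 + 1 ≤ C := Nat.le_mul_of_pos_left _ (Nat.succ_pos _)
  set M := 2 * C + 1 with hMdef
  set m : Fin (C+1) → (ℕ →₀ ℕ) :=
    fun i => Finsupp.single (i : ℕ) 1 + Finsupp.single (M - (i : ℕ)) 1 with hmdef
  have hmdeg : ∀ i, Finsupp.degree (m i) = 2 := by
    intro i; rw [hmdef]; rw [degAux_add, degAux_single, degAux_single]
  have hmwt : ∀ i, Finsupp.weight id (m i) = M := by
    intro i
    have hi : (i : ℕ) ≤ C := Nat.lt_succ_iff.mp i.isLt
    rw [hmdef]; rw [wtAux_add, wtAux_single, wtAux_single]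
    omega
  -- the generating set
  set G : Set (MvPolynomial ℕ K) := {y | ∃ x ∈ S, ∃ k : ℕ, y = (⇑D)^[k] x} with hGdef
  have hGeven : ∀ g ∈ G, ∀ d ∈ g.support, Even (Finsupp.degree d) := by
    rintro g ⟨x, hx, k, rfl⟩
    rw [hDeq]
    exact iter_even x (even_of_fixed x (hS x hx)) k
  -- the finite spanning set
  set vf : MvPolynomial ℕ K → (Fin (C+1) → K) := fun a => fun i => coeff (m i) a with hvfdef
  set T : Finset (Fin (C+1) → K) :=
    ((S ×ˢ Finset.range (W0+1)).image fun p => vf ((⇑D)^[M - W0 + p.2] p.1)) with hTdef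
  have hWM : W0 ≤ M := by omega
  have hvG : ∀ g ∈ G, vf g = 0 ∨ vf g ∈ T := by
    rintro g ⟨x, hx, k, rfl⟩
    by_cases hk : M - W0 ≤ k ∧ k ≤ M
    · right
      refine Finset.mem_image.mpr ⟨(x, k - (M - W0)), ?_, ?_⟩
      · exact Finset.mem_product.mpr ⟨hx, Finset.mem_range.mpr (by omega)⟩
      · have : M - W0 + (k - (M - W0)) = k := by omega
        rw [this]
    · left
      funext i
      show coeff (m i) ((⇑D)^[k] x) = 0
      refine notMem_support_iff.mp ?_
      intro hmem
      rw [hDeq] at hmem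
      have h1 := iter_wt_le x W0 (hW0 x hx) k (m i) hmem
      have h2 := iter_wt_ge x k (m i) hmem
      rw [hmwt i] at h1 h2
      omega
  -- there is a basis vector outside the span of T
  have hcard : T.card ≤ S.card * (W0 + 1) :=
    le_trans Finset.card_image_le (by rw [Finset.card_product, Finset.card_range])
  have hnotall : ¬ ∀ i : Fin (C+1), Pi.single i (1:K) ∈ Submodule.span K (↑T : Set (Fin (C+1) → K)) := by
    intro hall
    have htop : Submodule.span K (↑T : Set (Fin (C+1) → K)) = ⊤ := by
      rw [eq_top_iff, ← (Pi.basisFun K (Fin (C+1))).span_eq]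
      apply Submodule.span_le.mpr
      rintro _ ⟨i, rfl⟩
      rw [Pi.basisFun_apply]
      exact hall i
    have h1 : Module.finrank K (Fin (C+1) → K) ≤ T.card := by
      have := finrank_span_finset_le_card (R := K) T
      rw [Set.finrank, htop, finrank_top] at this
      exact this
    rw [Module.finrank_fin_fun] at h1
    have h2 : S.card * (W0 + 1) < C := by
      rw [hCdef]
      have : 0 < W0 + 1 := Nat.succ_pos _
      nlinarith [Nat.lt_succ_self S.card]
    omega
  push_neg at hnotall
  obtain ⟨i, hi⟩ := hnotall
  -- the witness polynomial
  set a : MvPolynomial ℕ K := X (i : ℕ) * X (M - (i : ℕ)) with hadef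
  have hσa : (aeval fun n : ℕ => -(X n : MvPolynomial ℕ K)) a = a := by
    rw [hadef, map_mul, aeval_X, aeval_X, neg_mul_neg]
  have hmem : a ∈ Algebra.adjoin K G := (hiff a).mpr hσa
  have hspan := (adjoin_even_span hGeven m hmdeg hmem).2
  -- the image of the adjoin lands in the span of T
  have hle : Submodule.span K ((fun g => fun j => coeff (m j) g) '' G)
      ≤ Submodule.span K (↑T : Set (Fin (C+1) → K)) := by
    apply Submodule.span_le.mpr
    rintro _ ⟨g, hg, rfl⟩
    have hbeta : ((fun g (j : Fin (C+1)) => coeff (m j) g) g) = vf g := rfl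
    rw [hbeta]
    rcases hvG g hg with h | h
    · rw [h]; exact Submodule.zero_mem _
    · exact Submodule.subset_span h
  have hva : (fun j => coeff (m j) a) = Pi.single i (1:K) := by
    funext j
    have hXX : a = monomial (Finsupp.single (i : ℕ) 1 + Finsupp.single (M - (i : ℕ)) 1) (1:K) := by
      rw [hadef, X, X, monomial_mul, mul_one]
    rw [hXX, coeff_monomial]
    have hi' : (i : ℕ) ≤ C := Nat.lt_succ_iff.mp i.isLt
    have hj' : (j : ℕ) ≤ C := Nat.lt_succ_iff.mp j.isLt
    by_cases hji : j = i
    · subst hji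
      rw [if_pos rfl, Pi.single_eq_same]
    · rw [if_neg, Pi.single_eq_of_ne hji]
      intro h
      have h' := DFunLike.congr_fun (h.trans (by rw [hmdef])) (i : ℕ)
      simp only [Finsupp.add_apply, Finsupp.single_apply] at h'
      have hMi : ¬ (M - (i:ℕ) = (i:ℕ)) := by omega
      have hMj : ¬ (M - (j:ℕ) = (i:ℕ)) := by omega
      have hjine : ¬ ((j:ℕ) = (i:ℕ)) := fun hc => hji (Fin.ext hc)
      simp [hMi, hMj, hjine] at h'
  exact hi (hva ▸ hle hspan)
end

section
/- Let A be a weak vertex operator algebra, i.e., a differential graded left-symmetric algebra whose Li filtration satisfies [E_i(A), E_j(A)] ⊆ E_{i+j+1}(A) where [a,b] = ab - ba. Then the associated graded algebra gr A = ⊕_{i≥0} E_i(A)/E_{i+1}(A), with product [a][b] = [ab], is a commutative associative differential graded algebra, with derivation induced by ∂. -/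
/-- Products `∂^{d₁}a₁ ⋯ ∂^{d_h}a_h` (with all parenthesizations) of derivatives of
homogeneous elements, with total derivative degree `d₁ + ⋯ + d_h` recorded. -/
inductive LiProd {K A : Type*} [Field K] [NonAssocRing A] [Module K A]
    (gr : ℕ → Submodule K A) (D : A →ₗ[K] A) : ℕ → A → Prop
  | single (d n : ℕ) (a : A) (ha : a ∈ gr n) : LiProd gr D d ((⇑D)^[d] a)
  | mul {i j : ℕ} {x y : A} :
      LiProd gr D i x → LiProd gr D j y → LiProd gr D (i + j) (x * y)

/-- The Li filtration: `E_n(A)` is the span of all products of derivatives of homogeneous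
elements with total derivative degree `≥ n`. -/
def LiE {K A : Type*} [Field K] [NonAssocRing A] [Module K A]
    (gr : ℕ → Submodule K A) (D : A →ₗ[K] A) (n : ℕ) : Submodule K A :=
  Submodule.span K {x : A | ∃ m : ℕ, n ≤ m ∧ LiProd gr D m x}



section LiAux
variable {K A : Type*} [Field K] [NonAssocRing A] [Module K A]
  (gr : ℕ → Submodule K A) (D : A →ₗ[K] A)

lemma LiE_mono {i j : ℕ} (h : i ≤ j) : LiE gr D j ≤ LiE gr D i :=
  Submodule.span_mono (fun _ ⟨m, hm, hp⟩ => ⟨m, h.trans hm, hp⟩)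

lemma LiProd.mem_LiE {m n : ℕ} (h : n ≤ m) {x : A} (hx : LiProd gr D m x) :
    x ∈ LiE gr D n :=
  Submodule.subset_span ⟨m, h, hx⟩

lemma LiE_mul [SMulCommClass K A A] [IsScalarTower K A A]
    (i j : ℕ) (x : A) (hx : x ∈ LiE gr D i) (y : A) (hy : y ∈ LiE gr D j) :
    x * y ∈ LiE gr D (i + j) := by
  induction hx using Submodule.span_induction with
  | mem x hx =>
    obtain ⟨m, hm, hp⟩ := hx
    induction hy using Submodule.span_induction with
    | mem y hy =>
      obtain ⟨m', hm', hp'⟩ := hy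
      exact Submodule.subset_span ⟨m + m', add_le_add hm hm', hp.mul hp'⟩
    | zero => simpa using Submodule.zero_mem _
    | add y z _ _ hy hz => rw [mul_add]; exact add_mem hy hz
    | smul c y _ hy => rw [mul_smul_comm]; exact Submodule.smul_mem _ _ hy
  | zero => simpa using Submodule.zero_mem _
  | add x z _ _ hx hz => rw [add_mul]; exact add_mem hx hz
  | smul c x _ hx => rw [smul_mul_assoc]; exact Submodule.smul_mem _ _ hx

lemma LiE_D [SMulCommClass K A A] [IsScalarTower K A A]
    (hleibniz : ∀ a b : A, D (a * b) = D a * b + a * D b)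
    (i : ℕ) (x : A) (hx : x ∈ LiE gr D i) : D x ∈ LiE gr D (i + 1) := by
  have key : ∀ (m : ℕ) (x : A), LiProd gr D m x → D x ∈ LiE gr D (m + 1) := by
    intro m x hx
    induction hx with
    | single d n a ha =>
      rw [← Function.iterate_succ_apply' (⇑D) d a]
      exact (LiProd.single (d + 1) n a ha).mem_LiE gr D le_rfl
    | @mul p q u v hu hv ihu ihv =>
      rw [hleibniz]
      refine add_mem ?_ ?_
      · have := LiE_mul gr D (p + 1) q _ ihu v (hv.mem_LiE gr D le_rfl)
        have e : p + 1 + q = p + q + 1 := by omega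
        rwa [e] at this
      · have := LiE_mul gr D p (q + 1) u (hu.mem_LiE gr D le_rfl) _ ihv
        have e : p + (q + 1) = p + q + 1 := by omega
        rwa [e] at this
  induction hx using Submodule.span_induction with
  | mem x hx =>
    obtain ⟨m, hm, hp⟩ := hx
    exact LiE_mono gr D (by omega) (key m x hp)
  | zero => simpa using Submodule.zero_mem _
  | add x z _ _ hx hz => rw [map_add]; exact add_mem hx hz
  | smul c x _ hx => rw [map_smul]; exact Submodule.smul_mem _ _ hx

end LiAux

/-- For a weak vertex operator algebra `A` (a differential graded left-symmetric algebra
whose Li filtration satisfies `[E_i, E_j] ⊆ E_{i+j+1}`), the associated graded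
`gr A = ⊕ E_i/E_{i+1}` with product `[a][b] = [ab]` and derivation induced by `∂` is a
commutative associative differential graded algebra: the product is well defined modulo
the filtration, graded, commutative and associative at the graded level, and `∂` induces
a degree-one derivation. -/
theorem weakVOA_gr_comm_assoc {K A : Type*} [Field K] [NonAssocRing A]
    [Module K A] [SMulCommClass K A A] [IsScalarTower K A A]
    (gr : ℕ → Submodule K A) (D : A →ₗ[K] A)
    (hone : (1 : A) ∈ gr 0)
    (hgr_mul : ∀ m n : ℕ, ∀ a ∈ gr m, ∀ b ∈ gr n, a * b ∈ gr (m + n))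
    (hgr_der : ∀ n : ℕ, ∀ a ∈ gr n, D a ∈ gr (n + 1))
    (hsup : (⨆ n : ℕ, gr n) = ⊤)
    (hleibniz : ∀ a b : A, D (a * b) = D a * b + a * D b)
    (hls : ∀ a b c : A, (a * b) * c - a * (b * c) = (b * a) * c - b * (a * c))
    (hbr : ∀ i j : ℕ, ∀ x ∈ LiE gr D i, ∀ y ∈ LiE gr D j,
      x * y - y * x ∈ LiE gr D (i + j + 1)) :
    -- the product of `gr A` is graded:
    (∀ i j : ℕ, ∀ x ∈ LiE gr D i, ∀ y ∈ LiE gr D j, x * y ∈ LiE gr D (i + j)) ∧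
    -- the product `[x][y] = [xy]` is well defined on `⊕ E_i/E_{i+1}`:
    (∀ i j : ℕ, ∀ x ∈ LiE gr D i, ∀ x' ∈ LiE gr D i, ∀ y ∈ LiE gr D j,
      x - x' ∈ LiE gr D (i + 1) →
        x * y - x' * y ∈ LiE gr D (i + j + 1) ∧ y * x - y * x' ∈ LiE gr D (i + j + 1)) ∧
    -- it is commutative:
    (∀ i j : ℕ, ∀ x ∈ LiE gr D i, ∀ y ∈ LiE gr D j,
      x * y - y * x ∈ LiE gr D (i + j + 1)) ∧
    -- it is associative:
    (∀ i j k : ℕ, ∀ x ∈ LiE gr D i, ∀ y ∈ LiE gr D j, ∀ z ∈ LiE gr D k,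
      (x * y) * z - x * (y * z) ∈ LiE gr D (i + j + k + 1)) ∧
    -- `∂` induces a well-defined degree-one map on the associated graded:
    (∀ i : ℕ, ∀ x ∈ LiE gr D i, D x ∈ LiE gr D (i + 1)) := by

  refine ⟨LiE_mul gr D, ?_, hbr, ?_, LiE_D gr D hleibniz⟩
  · intro i j x hx x' hx' y hy hd
    constructor
    · rw [← sub_mul]
      have := LiE_mul gr D (i + 1) j _ hd y hy
      have e : i + 1 + j = i + j + 1 := by omega
      rwa [e] at this
    · rw [← mul_sub]
      have := LiE_mul gr D j (i + 1) y hy _ hd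
      have e : j + (i + 1) = i + j + 1 := by omega
      rwa [e] at this
  · intro i j k x hx y hy z hz
    have h := hls z x y
    have h' : (z * x) * y = ((x * z) * y - x * (z * y)) + z * (x * y) :=
      sub_eq_iff_eq_add.mp h
    have key : (x * y) * z - x * (y * z)
        = ((x * y) * z - z * (x * y)) + ((z * x - x * z) * y)
          + (x * (z * y - y * z)) := by
      rw [sub_mul, mul_sub, h']
      abel
    rw [key]
    refine add_mem (add_mem ?_ ?_) ?_
    · exact hbr (i + j) k (x * y) (LiE_mul gr D i j x hx y hy) z hz
    · have := LiE_mul gr D (k + i + 1) j _ (hbr k i z hz x hx) y hy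
      have e : k + i + 1 + j = i + j + k + 1 := by omega
      rwa [e] at this
    · have := LiE_mul gr D i (k + j + 1) x hx _ (hbr k j z hz y hy)
      have e : i + (k + j + 1) = i + j + k + 1 := by omega
      rwa [e] at this
end

section
/- Let V be a vertex algebra and let A, B, C ⊆ V be C[∂]-submodules. Then ⟦A,B⟧ · C ⊆ ⟦A, B·C⟧, where X·Y is the span of all products x_{(n)}y with n ∈ ℤ and ⟦X,Y⟧ is the span of all x_{(n)}y with n ≥ 0. In particular, for any subset X ⊆ V, the subspace ⟦X, V⟧ is a two-sided vertex algebra ideal of V. -/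
/-- A vertex algebra over `ℂ`: a vector space with bilinear `n`-th products
`a ⊗ b ↦ a₍ₙ₎b` (`n ∈ ℤ`), vacuum element, and translation operator, satisfying the
field axiom, the vacuum axioms, translation invariance, and the standard consequences of
locality: quasi-commutativity, the non-commutative Wick formula, and the commutator
formula (all expressed in terms of modes). The normally ordered product is
`ab = a₍₋₁₎b` and the `λ`-bracket is `[a_λ b] = ∑_{n≥0} (λⁿ/n!) a₍ₙ₎b`. -/
structure VertexAlgebra (V : Type*) [AddCommGroup V] [Module ℂ V] where
  /-- the `n`-th products `a₍ₙ₎b` -/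
  np : ℤ → V →ₗ[ℂ] V →ₗ[ℂ] V
  /-- the vacuum element `𝟙` -/
  vac : V
  /-- the infinitesimal translation operator `∂` -/
  T : V →ₗ[ℂ] V
  /-- field axiom: `a₍ₙ₎b = 0` for `n` sufficiently large -/
  field_trunc : ∀ a b : V, ∃ N : ℕ, ∀ n : ℕ, N ≤ n → np (n : ℤ) a b = 0
  /-- vacuum axiom: `a₍₋₁₎𝟙 = a` -/
  vac_create : ∀ a : V, np (-1) a vac = a
  /-- vacuum axiom: `a₍ₙ₎𝟙 = 0` for `n ≥ 0` -/
  vac_ann : ∀ (a : V) (n : ℕ), np (n : ℤ) a vac = 0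
  /-- vacuum axiom: `Y(𝟙,z) = id` -/
  vac_id : ∀ (a : V) (n : ℤ), np n vac a = if n = -1 then a else 0
  /-- `(∂a)₍ₙ₎b = -n a₍ₙ₋₁₎b` -/
  trans_shift : ∀ (n : ℤ) (a b : V), np n (T a) b = (-n : ℂ) • np (n - 1) a b
  /-- translation invariance: `∂` is a derivation of all products -/
  trans_der : ∀ (n : ℤ) (a b : V), T (np n a b) = np n (T a) b + np n a (T b)
  /-- quasi-commutativity `ab - ba = ∫_{-∂}^0 dλ [a_λ b]` in terms of modes -/
  quasicomm : ∀ (a b : V) (N : ℕ), (∀ n : ℕ, N ≤ n → np (n : ℤ) a b = 0) →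
    np (-1) a b - np (-1) b a =
      ∑ n ∈ Finset.range N,
        ((-1 : ℂ) ^ n / (Nat.factorial (n + 1) : ℂ)) • (⇑T)^[n + 1] (np (n : ℤ) a b)
  /-- the non-commutative Wick formula
  `[a_λ bc] = [a_λ b]c + b[a_λ c] + ∫_0^λ dμ [[a_λ b]_μ c]` in terms of modes -/
  wick : ∀ (n : ℕ) (a b c : V),
    np (n : ℤ) a (np (-1) b c) =
      np (-1) (np (n : ℤ) a b) c + np (-1) b (np (n : ℤ) a c) +
      ∑ j ∈ Finset.Icc 1 n,
        (Nat.choose n j : ℂ) • np ((j : ℤ) - 1) (np ((n : ℤ) - (j : ℤ)) a b) c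
  /-- the commutator formula -/
  comm_formula : ∀ (m : ℕ) (n : ℤ) (a b c : V),
    np (m : ℤ) a (np n b c) - np n b (np (m : ℤ) a c) =
      ∑ j ∈ Finset.range (m + 1),
        (Nat.choose m j : ℂ) • np ((m : ℤ) + n - (j : ℤ)) (np (j : ℤ) a b) c

variable {V : Type*} [AddCommGroup V] [Module ℂ V]

/-- `A · B`: the span of all products `a₍ₙ₎b`, `a ∈ A`, `b ∈ B`, `n ∈ ℤ`. -/
def VertexAlgebra.allProd (W : VertexAlgebra V) (A B : Submodule ℂ V) : Submodule ℂ V :=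
  Submodule.span ℂ {x : V | ∃ a ∈ A, ∃ b ∈ B, ∃ n : ℤ, x = W.np n a b}

/-- `⟦A, B⟧`: the span of all products `a₍ₙ₎b`, `a ∈ A`, `b ∈ B`, `n ≥ 0`. -/
def VertexAlgebra.posProd (W : VertexAlgebra V) (A B : Submodule ℂ V) : Submodule ℂ V :=
  Submodule.span ℂ {x : V | ∃ a ∈ A, ∃ b ∈ B, ∃ n : ℕ, x = W.np (n : ℤ) a b}

/-- `⟦X, V⟧` for a subset `X ⊆ V`. -/
def VertexAlgebra.posProdSet (W : VertexAlgebra V) (X : Set V) : Submodule ℂ V :=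
  Submodule.span ℂ {x : V | ∃ a ∈ X, ∃ b : V, ∃ n : ℕ, x = W.np (n : ℤ) a b}

namespace VAProof

open Finset

variable (W : VertexAlgebra V)

private lemma S_succ (g : ℤ → ℤ → V) (r : ℕ) (P Q : ℤ) :
    (∑ j ∈ Finset.range (r+1), ((-1 : ℂ)^j * (r.choose j : ℂ)) • g (P - j) (Q + j))
      - ∑ j ∈ Finset.range (r+1), ((-1 : ℂ)^j * (r.choose j : ℂ)) • g (P - 1 - j) (Q + 1 + j)
    = ∑ j ∈ Finset.range (r+2), ((-1 : ℂ)^j * ((r+1).choose j : ℂ)) • g (P - j) (Q + j) := by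
  have h1 : (∑ j ∈ Finset.range (r+1), ((-1 : ℂ)^j * (r.choose j : ℂ)) • g (P - j) (Q + j))
      = ∑ j ∈ Finset.range (r+2), ((-1 : ℂ)^j * (r.choose j : ℂ)) • g (P - j) (Q + j) := by
    rw [Finset.sum_range_succ (n := r+1), Nat.choose_eq_zero_of_lt (Nat.lt_succ_self r)]
    simp
  have h2 : (∑ j ∈ Finset.range (r+2),
        (if j = 0 then (0:ℂ) else (-1 : ℂ)^(j-1) * (r.choose (j-1) : ℂ)) • g (P - j) (Q + j))
      = ∑ j ∈ Finset.range (r+1), ((-1 : ℂ)^j * (r.choose j : ℂ)) • g (P - 1 - j) (Q + 1 + j) := by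
    rw [Finset.sum_range_succ' (fun j => (if j = 0 then (0:ℂ) else (-1 : ℂ)^(j-1) * (r.choose (j-1) : ℂ)) • g (P - j) (Q + j)) (r+1)]
    simp only [reduceIte, zero_smul, add_zero]
    refine Finset.sum_congr rfl fun j hj => ?_
    rw [if_neg (Nat.succ_ne_zero j), Nat.succ_sub_one,
      show (P - (j+1 : ℕ) : ℤ) = P - 1 - j by push_cast; ring,
      show (Q + (j+1 : ℕ) : ℤ) = Q + 1 + j by push_cast; ring]
  rw [h1, ← h2, ← Finset.sum_sub_distrib]
  refine Finset.sum_congr rfl fun j hj => ?_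
  rw [← sub_smul]
  congr 1
  cases j with
  | zero => simp
  | succ i =>
    simp only [if_neg (Nat.succ_ne_zero i), Nat.succ_sub_one, Nat.choose_succ_succ]
    push_cast
    ring

private lemma H_succ (s : ℤ → ℤ → V) (p : ℕ) (Q R : ℤ) :
    (∑ j ∈ Finset.range (p+2), (((p+1).choose j : ℂ)) • s (Q - j) (R + j))
      - ∑ j ∈ Finset.range (p+1), ((p.choose j : ℂ)) • s (Q - j) (R + j)
    = ∑ j ∈ Finset.range (p+1), ((p.choose j : ℂ)) • s (Q - 1 - j) (R + 1 + j) := by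
  have h1 : (∑ j ∈ Finset.range (p+1), ((p.choose j : ℂ)) • s (Q - j) (R + j))
      = ∑ j ∈ Finset.range (p+2), ((p.choose j : ℂ)) • s (Q - j) (R + j) := by
    rw [Finset.sum_range_succ (n := p+1), Nat.choose_eq_zero_of_lt (Nat.lt_succ_self p)]
    simp
  have h2 : (∑ j ∈ Finset.range (p+2),
        (if j = 0 then (0:ℂ) else ((p.choose (j-1) : ℂ))) • s (Q - j) (R + j))
      = ∑ j ∈ Finset.range (p+1), ((p.choose j : ℂ)) • s (Q - 1 - j) (R + 1 + j) := by
    rw [Finset.sum_range_succ' (fun j => (if j = 0 then (0:ℂ) else ((p.choose (j-1) : ℂ))) • s (Q - j) (R + j)) (p+1)]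
    simp only [reduceIte, zero_smul, add_zero]
    refine Finset.sum_congr rfl fun j hj => ?_
    rw [if_neg (Nat.succ_ne_zero j), Nat.succ_sub_one,
      show (Q - (j+1 : ℕ) : ℤ) = Q - 1 - j by push_cast; ring,
      show (R + (j+1 : ℕ) : ℤ) = R + 1 + j by push_cast; ring]
  rw [h1, ← h2, ← Finset.sum_sub_distrib]
  refine Finset.sum_congr rfl fun j hj => ?_
  rw [← sub_smul]
  congr 1
  cases j with
  | zero => simp
  | succ i =>
    simp only [if_neg (Nat.succ_ne_zero i), Nat.succ_sub_one, Nat.choose_succ_succ]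
    push_cast
    ring


theorem borcherds (a b c : V) : ∀ (r p : ℕ) (q : ℤ),
    (∑ j ∈ Finset.range (p+1), (p.choose j : ℂ) • W.np ((p:ℤ) + q - j) (W.np ((r:ℤ) + j) a b) c)
    = (∑ j ∈ Finset.range (r+1), ((-1 : ℂ)^j * (r.choose j : ℂ)) • W.np ((p:ℤ) + r - j) a (W.np (q + j) b c))
      - ∑ j ∈ Finset.range (r+1), ((-1 : ℂ)^j * (r.choose j : ℂ)) • W.np (q + j) b (W.np ((p:ℤ) + r - j) a c) := by
  intro r
  induction r with
  | zero =>
    intro p q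
    simp only [Nat.cast_zero, zero_add, add_zero, sub_zero, Finset.sum_range_one,
      Nat.choose_self, Nat.cast_one, mul_one, pow_zero, one_mul, one_smul, Nat.cast_ofNat]
    exact (W.comm_formula p q a b c).symm
  | succ r ih =>
    intro p q
    have e0 : (∑ j ∈ Finset.range (p+1), (p.choose j : ℂ) •
          W.np ((p:ℤ) + q - j) (W.np (((r+1 : ℕ):ℤ) + j) a b) c)
        = ∑ j ∈ Finset.range (p+1), (p.choose j : ℂ) •
            ((fun u v => W.np u (W.np v a b) c) (((p:ℤ)+q+1) - 1 - j) ((r:ℤ) + 1 + j)) := by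
      refine Finset.sum_congr rfl fun j hj => ?_
      rw [show (((p:ℤ)+q+1) - 1 - j : ℤ) = (p:ℤ) + q - j by ring,
        show ((r:ℤ) + 1 + j : ℤ) = ((r+1 : ℕ):ℤ) + j by push_cast; ring]
    rw [e0, ← H_succ (fun u v => W.np u (W.np v a b) c) p ((p:ℤ)+q+1) (r:ℤ)]
    have e1 : (∑ j ∈ Finset.range (p+2), (((p+1).choose j : ℂ)) •
          (fun u v => W.np u (W.np v a b) c) (((p:ℤ)+q+1) - j) ((r:ℤ) + j))
        = ∑ j ∈ Finset.range ((p+1)+1), ((p+1).choose j : ℂ) •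
            W.np (((p+1:ℕ):ℤ) + q - j) (W.np ((r:ℤ) + j) a b) c := by
      refine Finset.sum_congr rfl fun j hj => ?_
      rw [show (((p:ℤ)+q+1) - j : ℤ) = ((p+1:ℕ):ℤ) + q - j by push_cast; ring]
    have e2 : (∑ j ∈ Finset.range (p+1), ((p.choose j : ℂ)) •
          (fun u v => W.np u (W.np v a b) c) (((p:ℤ)+q+1) - j) ((r:ℤ) + j))
        = ∑ j ∈ Finset.range (p+1), (p.choose j : ℂ) •
            W.np ((p:ℤ) + (q+1) - j) (W.np ((r:ℤ) + j) a b) c := by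
      refine Finset.sum_congr rfl fun j hj => ?_
      rw [show (((p:ℤ)+q+1) - j : ℤ) = (p:ℤ) + (q+1) - j by ring]
    rw [e1, e2, ih (p+1) q, ih p (q+1)]
    have e3 : ∀ (q' : ℤ),
        (∑ j ∈ Finset.range (r+1), ((-1 : ℂ)^j * (r.choose j : ℂ)) •
            W.np (((p+1:ℕ):ℤ) + r - j) a (W.np (q' + j) b c))
        = ∑ j ∈ Finset.range (r+1), ((-1 : ℂ)^j * (r.choose j : ℂ)) •
            (fun u v => W.np u a (W.np v b c)) (((p:ℤ) + r + 1) - j) (q' + j) := by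
      intro q'
      refine Finset.sum_congr rfl fun j hj => ?_
      rw [show (((p:ℤ) + r + 1) - j : ℤ) = ((p+1:ℕ):ℤ) + r - j by push_cast; ring]
    have e4 : (∑ j ∈ Finset.range (r+1), ((-1 : ℂ)^j * (r.choose j : ℂ)) •
            W.np ((p:ℤ) + r - j) a (W.np ((q+1) + j) b c))
        = ∑ j ∈ Finset.range (r+1), ((-1 : ℂ)^j * (r.choose j : ℂ)) •
            (fun u v => W.np u a (W.np v b c)) (((p:ℤ) + r + 1) - 1 - j) (q + 1 + j) := by
      refine Finset.sum_congr rfl fun j hj => ?_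
      rw [show (((p:ℤ) + r + 1) - 1 - j : ℤ) = (p:ℤ) + r - j by ring,
        show (q + 1 + j : ℤ) = (q+1) + j by ring]
    have e5 : ∀ (q' : ℤ),
        (∑ j ∈ Finset.range (r+1), ((-1 : ℂ)^j * (r.choose j : ℂ)) •
            W.np (q' + j) b (W.np (((p+1:ℕ):ℤ) + r - j) a c))
        = ∑ j ∈ Finset.range (r+1), ((-1 : ℂ)^j * (r.choose j : ℂ)) •
            (fun u v => W.np v b (W.np u a c)) (((p:ℤ) + r + 1) - j) (q' + j) := by
      intro q'
      refine Finset.sum_congr rfl fun j hj => ?_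
      rw [show (((p:ℤ) + r + 1) - j : ℤ) = ((p+1:ℕ):ℤ) + r - j by push_cast; ring]
    have e6 : (∑ j ∈ Finset.range (r+1), ((-1 : ℂ)^j * (r.choose j : ℂ)) •
            W.np ((q+1) + j) b (W.np ((p:ℤ) + r - j) a c))
        = ∑ j ∈ Finset.range (r+1), ((-1 : ℂ)^j * (r.choose j : ℂ)) •
            (fun u v => W.np v b (W.np u a c)) (((p:ℤ) + r + 1) - 1 - j) (q + 1 + j) := by
      refine Finset.sum_congr rfl fun j hj => ?_
      rw [show (((p:ℤ) + r + 1) - 1 - j : ℤ) = (p:ℤ) + r - j by ring,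
        show (q + 1 + j : ℤ) = (q+1) + j by ring]
    rw [e3 q, e4, e5 q, e6]
    rw [show ∀ (A1 B1 A2 B2 : V), (A1 - B1) - (A2 - B2) = (A1 - A2) - (B1 - B2) from
      fun _ _ _ _ => by abel]
    rw [S_succ (fun u v => W.np u a (W.np v b c)) r ((p:ℤ) + r + 1) q,
      S_succ (fun u v => W.np v b (W.np u a c)) r ((p:ℤ) + r + 1) q]
    rfl

private lemma memJ {A B C : Submodule ℂ V} {a b c : V}
    (ha : a ∈ A) (hb : b ∈ B) (hc : c ∈ C) (m : ℕ) (n : ℤ) :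
    W.np (m:ℤ) a (W.np n b c) ∈ W.posProd A (W.allProd B C) :=
  Submodule.subset_span ⟨a, ha, _, Submodule.subset_span ⟨b, hb, c, hc, n, rfl⟩, m, rfl⟩

lemma Qmem {A B C : Submodule ℂ V} {a b c : V}
    (ha : a ∈ A) (hb : b ∈ B) (hc : c ∈ C) :
    ∀ (s : ℕ) (k : ℤ), W.np k b (W.np (s:ℤ) a c) ∈ W.posProd A (W.allProd B C) := by
  obtain ⟨Nab, hNab⟩ := W.field_trunc a b
  obtain ⟨Nac, hNac⟩ := W.field_trunc a c
  suffices H : ∀ d s, Nac ≤ s + d → ∀ k,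
      W.np k b (W.np (s:ℤ) a c) ∈ W.posProd A (W.allProd B C) by
    exact fun s k => H Nac s (by omega) k
  intro d
  induction d with
  | zero =>
    intro s hs k
    rw [hNac s (by omega)]
    simp
  | succ d ih =>
    intro s hs k
    by_cases hcase : Nac ≤ s
    · rw [hNac s hcase]; simp
    · push_neg at hcase
      have bor := borcherds W a b c Nab s (k - Nab)
      have hL : (∑ j ∈ Finset.range (s+1), (s.choose j : ℂ) •
            W.np ((s:ℤ) + (k - Nab) - j) (W.np ((Nab:ℤ) + j) a b) c) = 0 := by
        refine Finset.sum_eq_zero fun j hj => ?_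
        rw [show ((Nab:ℤ) + j) = ((Nab + j : ℕ) : ℤ) by push_cast; ring,
          hNab (Nab + j) (Nat.le_add_right _ _)]
        simp
      rw [hL] at bor
      have hSB := (sub_eq_zero.mp bor.symm).symm
      rw [Finset.sum_range_succ] at hSB
      -- hSB : Σ' + last = SA
      have h1 : ((-1 : ℂ)^Nab * (Nab.choose Nab : ℂ)) •
            W.np ((k - Nab) + Nab) b (W.np ((s:ℤ) + Nab - Nab) a c)
          = (∑ j ∈ Finset.range (Nab+1), ((-1 : ℂ)^j * (Nab.choose j : ℂ)) •
              W.np ((s:ℤ) + Nab - j) a (W.np ((k - Nab) + j) b c))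
            - ∑ j ∈ Finset.range Nab, ((-1 : ℂ)^j * (Nab.choose j : ℂ)) •
              W.np ((k - Nab) + j) b (W.np ((s:ℤ) + Nab - j) a c) := by
        rw [← hSB]; abel
      rw [Nat.choose_self, Nat.cast_one, mul_one,
        show ((k - Nab) + Nab : ℤ) = k by ring,
        show ((s:ℤ) + Nab - Nab : ℤ) = (s:ℤ) by ring] at h1
      have h2 : W.np k b (W.np (s:ℤ) a c)
          = ((-1 : ℂ)^Nab) • (((-1 : ℂ)^Nab) • W.np k b (W.np (s:ℤ) a c)) := by
        rw [smul_smul, ← pow_add, Even.neg_one_pow ⟨Nab, rfl⟩, one_smul]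
      rw [h2, h1]
      refine Submodule.smul_mem _ _ (Submodule.sub_mem _
        (Submodule.sum_mem _ fun j hj => Submodule.smul_mem _ _ ?_)
        (Submodule.sum_mem _ fun j hj => Submodule.smul_mem _ _ ?_))
      · have hj' : j ≤ Nab := by
          have := Finset.mem_range.mp hj; omega
        rw [show ((s:ℤ) + Nab - j) = ((s + Nab - j : ℕ) : ℤ) by omega]
        exact memJ W ha hb hc _ _
      · have hj' : j < Nab := Finset.mem_range.mp hj
        rw [show ((s:ℤ) + Nab - j) = ((s + Nab - j : ℕ) : ℤ) by omega]
        exact ih (s + Nab - j) (by omega) _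

lemma Pmem {A B C : Submodule ℂ V} {a b c : V}
    (ha : a ∈ A) (hb : b ∈ B) (hc : c ∈ C) (m : ℕ) :
    ∀ (n : ℤ), W.np n (W.np (m:ℤ) a b) c ∈ W.posProd A (W.allProd B C) := by
  induction m using Nat.strong_induction_on with
  | _ m IH =>
    intro n
    have comm := W.comm_formula m n a b c
    rw [Finset.sum_range_succ, Nat.choose_self, Nat.cast_one, one_smul,
      show ((m:ℤ) + n - m) = n by ring] at comm
    have hX : W.np n (W.np (m:ℤ) a b) c
        = (W.np (m:ℤ) a (W.np n b c) - W.np n b (W.np (m:ℤ) a c))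
          - ∑ j ∈ Finset.range m, (m.choose j : ℂ) •
              W.np ((m:ℤ) + n - j) (W.np (j:ℤ) a b) c := by
      rw [comm]; abel
    rw [hX]
    exact Submodule.sub_mem _
      (Submodule.sub_mem _ (memJ W ha hb hc m n) (Qmem W ha hb hc m n))
      (Submodule.sum_mem _ fun j hj => Submodule.smul_mem _ _
        (IH j (Finset.mem_range.mp hj) _))

lemma part1 (A B C : Submodule ℂ V) :
    W.allProd (W.posProd A B) C ≤ W.posProd A (W.allProd B C) := by
  rw [VertexAlgebra.allProd, Submodule.span_le]
  rintro x ⟨u, hu, c, hc, n, rfl⟩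
  rw [VertexAlgebra.posProd] at hu
  induction hu using Submodule.span_induction with
  | mem u hu =>
    obtain ⟨a, ha, b, hb, m, rfl⟩ := hu
    exact Pmem W ha hb hc m n
  | zero => simp
  | add x y hx hy ihx ihy =>
    simp only [map_add, LinearMap.add_apply]
    exact add_mem ihx ihy
  | smul t x hx ihx =>
    simp only [map_smul, LinearMap.smul_apply]
    exact Submodule.smul_mem _ _ ihx

def Aspan (X : Set V) : Submodule ℂ V :=
  Submodule.span ℂ {y : V | ∃ x ∈ X, ∃ i : ℕ, y = (⇑W.T)^[i] x}

lemma Aspan_T (X : Set V) : ∀ u ∈ Aspan W X, W.T u ∈ Aspan W X := by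
  intro u hu
  induction hu using Submodule.span_induction with
  | mem y hy =>
    obtain ⟨x, hx, i, rfl⟩ := hy
    exact Submodule.subset_span ⟨x, hx, i+1, (Function.iterate_succ_apply' _ _ _).symm⟩
  | zero => simp
  | add x y hx hy ihx ihy => simp only [map_add]; exact add_mem ihx ihy
  | smul t x hx ihx => simp only [map_smul]; exact Submodule.smul_mem _ _ ihx

lemma iter_np_mem (X : Set V) (x : V) (hx : x ∈ X) :
    ∀ (i : ℕ) (n : ℕ) (v : V), W.np (n:ℤ) ((⇑W.T)^[i] x) v ∈ W.posProdSet X := by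
  intro i
  induction i with
  | zero => exact fun n v => Submodule.subset_span ⟨x, hx, v, n, rfl⟩
  | succ i ih =>
    intro n v
    rw [Function.iterate_succ_apply', W.trans_shift]
    cases n with
    | zero => simp
    | succ k =>
      rw [show (((k+1 : ℕ):ℤ) - 1) = (k:ℤ) by push_cast; ring]
      exact Submodule.smul_mem _ _ (ih k v)

lemma posProdSet_le (X : Set V) : W.posProdSet X ≤ W.posProd (Aspan W X) ⊤ := by
  rw [VertexAlgebra.posProdSet, Submodule.span_le]
  rintro y ⟨x, hx, v, n, rfl⟩
  exact Submodule.subset_span ⟨x, Submodule.subset_span ⟨x, hx, 0, rfl⟩, v, trivial, n, rfl⟩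

lemma le_posProdSet (X : Set V) : W.posProd (Aspan W X) ⊤ ≤ W.posProdSet X := by
  rw [VertexAlgebra.posProd, Submodule.span_le]
  rintro y ⟨u, hu, v, -, n, rfl⟩
  induction hu using Submodule.span_induction with
  | mem y hy =>
    obtain ⟨x, hx, i, rfl⟩ := hy
    exact iter_np_mem W X x hx i n v
  | zero => simp
  | add x y hx hy ihx ihy =>
    simp only [map_add, LinearMap.add_apply]
    exact add_mem ihx ihy
  | smul t x hx ihx =>
    simp only [map_smul, LinearMap.smul_apply]
    exact Submodule.smul_mem _ _ ihx

lemma rightMul (X : Set V) {u : V} (hu : u ∈ W.posProdSet X) (k : ℤ) (w : V) :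
    W.np k u w ∈ W.posProdSet X := by
  apply le_posProdSet W X
  have h1 : W.np k u w ∈ W.allProd (W.posProd (Aspan W X) ⊤) ⊤ :=
    Submodule.subset_span ⟨u, posProdSet_le W X hu, w, trivial, k, rfl⟩
  have h2 := part1 W (Aspan W X) ⊤ ⊤ h1
  refine Submodule.span_le.mpr ?_ h2
  rintro y ⟨a', ha', b', hb', m, rfl⟩
  exact Submodule.subset_span ⟨a', ha', b', trivial, m, rfl⟩

lemma Tstab (X : Set V) {u : V} (hu : u ∈ W.posProdSet X) : W.T u ∈ W.posProdSet X := by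
  induction hu using Submodule.span_induction with
  | mem y hy =>
    obtain ⟨x, hx, v, n, rfl⟩ := hy
    rw [W.trans_der]
    refine add_mem ?_ (Submodule.subset_span ⟨x, hx, W.T v, n, rfl⟩)
    rw [W.trans_shift]
    cases n with
    | zero => simp
    | succ k =>
      rw [show (((k+1 : ℕ):ℤ) - 1) = (k:ℤ) by push_cast; ring]
      exact Submodule.smul_mem _ _ (Submodule.subset_span ⟨x, hx, v, k, rfl⟩)
  | zero => simp
  | add x y hx hy ihx ihy => simp only [map_add]; exact add_mem ihx ihy
  | smul t x hx ihx => simp only [map_smul]; exact Submodule.smul_mem _ _ ihx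

lemma leftMul (X : Set V) {u : V} (hu : u ∈ W.posProdSet X) (k : ℤ) (v : V) :
    W.np k v u ∈ W.posProdSet X := by
  induction hu using Submodule.span_induction with
  | mem y hy =>
    obtain ⟨x, hx, w, m, rfl⟩ := hy
    have comm := W.comm_formula m k x v w
    have hX : W.np k v (W.np (m:ℤ) x w)
        = W.np (m:ℤ) x (W.np k v w)
          - ∑ j ∈ Finset.range (m+1), (m.choose j : ℂ) •
              W.np ((m:ℤ) + k - j) (W.np (j:ℤ) x v) w := by
      rw [← comm]; abel
    rw [hX]
    exact sub_mem (Submodule.subset_span ⟨x, hx, _, m, rfl⟩)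
      (Submodule.sum_mem _ fun j hj => Submodule.smul_mem _ _
        (rightMul W X (Submodule.subset_span ⟨x, hx, v, j, rfl⟩) _ w))
  | zero => simp
  | add x y hx hy ihx ihy => simp only [map_add]; exact add_mem ihx ihy
  | smul t x hx ihx => simp only [map_smul]; exact Submodule.smul_mem _ _ ihx

end VAProof


/-- For `ℂ[∂]`-submodules `A, B, C` of a vertex algebra `V` one has
`⟦A,B⟧ · C ⊆ ⟦A, B·C⟧`.  In particular, for any subset `X ⊆ V`, the subspace `⟦X, V⟧`
is a two-sided vertex algebra ideal of `V`. -/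
theorem posProd_allProd_le_and_ideal (W : VertexAlgebra V) :
    (∀ A B C : Submodule ℂ V,
      (∀ a ∈ A, W.T a ∈ A) → (∀ b ∈ B, W.T b ∈ B) → (∀ c ∈ C, W.T c ∈ C) →
        W.allProd (W.posProd A B) C ≤ W.posProd A (W.allProd B C)) ∧
    (∀ X : Set V, ∀ a ∈ W.posProdSet X,
      W.T a ∈ W.posProdSet X ∧
      ∀ (v : V) (n : ℤ),
        W.np n a v ∈ W.posProdSet X ∧ W.np n v a ∈ W.posProdSet X) := by
  constructor
  · exact fun A B C _ _ _ => VAProof.part1 W A B C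
  · intro X a ha
    exact ⟨VAProof.Tstab W X ha, fun v n =>
      ⟨VAProof.rightMul W X ha n v, VAProof.leftMul W X ha n v⟩⟩
end

section
/- Let V be a vertex algebra and a, b ∈ V with λ-bracket [a_λ b] = Σ_{j=0}^n λ^j c_j. Then for each i with 0 ≤ i ≤ n, ∂^{n-i}[∂^i a, b] = Σ_{j=0}^n ((-1)^j/(i+j+1)) ∂^{n+j+1} c_j, where [x,y] = xy - yx is the commutator of the normally ordered product. Since the (n+1)×(n+1) matrix with entries 1/(i+j+1) (a Hilbert matrix, up to signs in columns) is invertible, the elements ∂^{n+j+1}c_j are uniquely determined by the commutators [∂^i a, b], 0 ≤ i ≤ n. -/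
open Polynomial Finset in
private lemma va_scalar_inj (n : ℕ) (y : Fin (n+1) → ℂ)
    (h : ∀ i : Fin (n+1), ∑ j : Fin (n+1), y j / ((i : ℂ) + (j : ℂ) + 1) = 0) :
    ∀ j, y j = 0 := by
  set p : ℂ[X] := ∑ j : Fin (n+1), C (y j) * ∏ k ∈ univ.erase j, (X + C ((k : ℂ) + 1)) with hp
  have hdenom : ∀ (i j : Fin (n+1)), ((i : ℂ) + (j : ℂ) + 1) ≠ 0 := by
    intro i j
    have h1 : ((i : ℂ) + (j : ℂ) + 1) = (((i : ℕ) + (j : ℕ) + 1 : ℕ) : ℂ) := by push_cast; ring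
    rw [h1]
    exact Nat.cast_ne_zero.mpr (Nat.succ_ne_zero _)
  have hpz : p = 0 := by
    apply eq_zero_of_natDegree_lt_card_of_eval_eq_zero p
      (f := fun i : Fin (n+1) => (i : ℂ))
    · intro i j hij
      exact Fin.ext (Nat.cast_injective hij)
    · intro i
      rw [hp]
      simp only [eval_finset_sum, eval_mul, eval_C, eval_prod, eval_add, eval_X]
      have : ∀ j : Fin (n+1),
          y j * ∏ k ∈ univ.erase j, ((i : ℂ) + ((k : ℂ) + 1)) =
          (∏ k : Fin (n+1), ((i : ℂ) + ((k : ℂ) + 1))) * (y j / ((i : ℂ) + (j : ℂ) + 1)) := by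
        intro j
        rw [← Finset.mul_prod_erase (univ : Finset (Fin (n+1))) (fun k => ((i : ℂ) + ((k : ℂ) + 1))) (mem_univ j)]
        field_simp [hdenom i j]
        ring
      rw [Finset.sum_congr rfl (fun j _ => this j), ← Finset.mul_sum, h i, mul_zero]
    · calc p.natDegree ≤ n := by
            apply natDegree_sum_le_of_forall_le
            intro j _
            refine (natDegree_C_mul_le _ _).trans ?_
            refine (natDegree_prod_le _ _).trans ?_
            calc ∑ k ∈ univ.erase j, (X + C ((k:ℂ)+1)).natDegree
                ≤ ∑ k ∈ univ.erase j, 1 := by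
                  apply Finset.sum_le_sum; intro k _; exact (natDegree_X_add_C _).le
              _ = n := by simp [Finset.card_erase_of_mem]
          _ < Fintype.card (Fin (n+1)) := by simp
  intro j
  have hev := congrArg (fun q => q.eval (-( (j:ℂ) + 1))) hpz
  simp only [hp, eval_finset_sum, eval_mul, eval_C, eval_prod, eval_add, eval_X, eval_zero] at hev
  rw [Finset.sum_eq_single j] at hev
  · have hprod : (∏ k ∈ univ.erase j, (-( (j:ℂ) + 1) + ((k : ℂ) + 1))) ≠ 0 := by
      apply Finset.prod_ne_zero_iff.mpr
      intro k hk
      have hkj : k ≠ j := (Finset.mem_erase.mp hk).1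
      intro hcon
      apply hkj
      have : (k : ℂ) = (j : ℂ) := by linear_combination hcon
      exact Fin.ext (Nat.cast_injective this)
    rcases mul_eq_zero.mp hev with h1 | h1
    · exact h1
    · exact absurd h1 hprod
  · intro j' _ hj'
    have : (∏ k ∈ univ.erase j', (-( (j:ℂ) + 1) + ((k : ℂ) + 1))) = 0 := by
      apply Finset.prod_eq_zero (Finset.mem_erase.mpr ⟨Ne.symm hj', mem_univ j⟩)
      ring
    rw [this, mul_zero]
  · simp

open Finset in
private lemma va_module_inj {V : Type*} [AddCommGroup V] [Module ℂ V] (n : ℕ)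
    (v : Fin (n+1) → V)
    (h : ∀ i : Fin (n+1), ∑ j : Fin (n+1), ((-1:ℂ)^(j:ℕ) / ((i:ℂ)+(j:ℂ)+1)) • v j = 0) :
    ∀ j, v j = 0 := by
  set M : Matrix (Fin (n+1)) (Fin (n+1)) ℂ :=
    Matrix.of (fun i j => (-1:ℂ)^(j:ℕ) / ((i:ℂ)+(j:ℂ)+1)) with hM
  have hunit : IsUnit M := by
    rw [← Matrix.mulVec_injective_iff_isUnit]
    intro x₁ x₂ hx
    funext j
    have key : ∀ j : Fin (n+1), ((-1:ℂ)^(j:ℕ) * (x₁ j - x₂ j)) = 0 := by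
      apply va_scalar_inj n
      intro i
      have h2 := congrFun hx i
      simp only [Matrix.mulVec, dotProduct, hM, Matrix.of_apply] at h2
      have : ∀ j : Fin (n+1), ((-1:ℂ)^(j:ℕ) * (x₁ j - x₂ j)) / ((i:ℂ)+(j:ℂ)+1)
          = (-1:ℂ)^(j:ℕ) / ((i:ℂ)+(j:ℂ)+1) * x₁ j - (-1:ℂ)^(j:ℕ) / ((i:ℂ)+(j:ℂ)+1) * x₂ j := by
        intro j; ring
      rw [Finset.sum_congr rfl (fun j _ => this j), Finset.sum_sub_distrib, h2, sub_self]
    have hkey := key j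
    have hne : ((-1:ℂ)^(j:ℕ)) ≠ 0 := by
      apply pow_ne_zero; norm_num
    rcases mul_eq_zero.mp hkey with h1 | h1
    · exact absurd h1 hne
    · exact sub_eq_zero.mp h1
  have hdet := Matrix.nonsing_inv_mul M ((Matrix.isUnit_iff_isUnit_det M).mp hunit)
  intro j
  calc v j = ∑ k : Fin (n+1), ((M⁻¹ * M) j k) • v k := by
        rw [hdet]; simp [Matrix.one_apply]
    _ = ∑ k : Fin (n+1), ∑ i : Fin (n+1), (M⁻¹ j i * M i k) • v k := by
        simp [Matrix.mul_apply, Finset.sum_smul]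
    _ = ∑ i : Fin (n+1), M⁻¹ j i • ∑ k : Fin (n+1), M i k • v k := by
        rw [Finset.sum_comm]; simp [mul_smul, Finset.smul_sum]
    _ = 0 := by
        have hz : ∀ i : Fin (n+1), ∑ k : Fin (n+1), M i k • v k = 0 := fun i => h i
        simp [hz]

section VAaux
variable {V : Type*} [AddCommGroup V] [Module ℂ V] (W : VertexAlgebra V)

private lemma va_iter_smul (k : ℕ) (s : ℂ) (x : V) :
    (⇑W.T)^[k] (s • x) = s • (⇑W.T)^[k] x := by
  rw [← Module.End.pow_apply, ← Module.End.pow_apply, map_smul]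

private lemma va_iter_zero (k : ℕ) : (⇑W.T)^[k] (0 : V) = 0 :=
  Function.iterate_fixed (map_zero W.T) k

private lemma va_shift_iter (a b : V) :
    ∀ (i m : ℕ), W.np ((m + i : ℕ) : ℤ) ((⇑W.T)^[i] a) b
      = (((-1:ℂ)^i * (Nat.factorial (m+i) : ℂ) / (Nat.factorial m : ℂ))) • W.np (m : ℤ) a b := by
  intro i
  induction i with
  | zero =>
    intro m
    have hm : (Nat.factorial m : ℂ) ≠ 0 := Nat.cast_ne_zero.mpr (Nat.factorial_ne_zero m)
    simp [div_self hm]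
  | succ i ih =>
    intro m
    rw [Function.iterate_succ_apply']
    have hcast : ((m + (i+1) : ℕ) : ℤ) - 1 = ((m + i : ℕ) : ℤ) := by push_cast; ring
    rw [W.trans_shift, hcast, ih m, smul_smul]
    congr 1
    have hfact : (Nat.factorial (m + (i+1)) : ℂ) = ((m + i + 1 : ℕ) : ℂ) * (Nat.factorial (m+i) : ℂ) := by
      have : m + (i+1) = (m + i) + 1 := by ring
      rw [this, Nat.factorial_succ]
      push_cast; ring
    have hm : (Nat.factorial m : ℂ) ≠ 0 := Nat.cast_ne_zero.mpr (Nat.factorial_ne_zero m)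
    rw [hfact]
    field_simp
    push_cast
    ring

private lemma va_shift_small (a b : V) :
    ∀ (i m : ℕ), m < i → W.np ((m : ℕ) : ℤ) ((⇑W.T)^[i] a) b = 0 := by
  intro i
  induction i with
  | zero => intro m hm; omega
  | succ i ih =>
    intro m hm
    rw [Function.iterate_succ_apply', W.trans_shift]
    rcases Nat.eq_zero_or_pos m with h0 | h0
    · subst h0; simp
    · obtain ⟨m', rfl⟩ := Nat.exists_eq_succ_of_ne_zero (Nat.pos_iff_ne_zero.mp h0)
      have : ((m' + 1 : ℕ) : ℤ) - 1 = ((m' : ℕ) : ℤ) := by push_cast; ring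
      rw [this, ih m' (by omega), smul_zero]

end VAaux

/-- Let `V` be a vertex algebra and `a, b ∈ V` with `[a_λ b] = ∑_{j=0}^n λʲ cⱼ`
(i.e. `a₍ⱼ₎b = j! cⱼ` for `j ≤ n` and `a₍ⱼ₎b = 0` for `j > n`).  Then for `0 ≤ i ≤ n`,
`∂^{n-i}[∂ⁱa, b] = ∑_{j=0}^n ((-1)ʲ/(i+j+1)) ∂^{n+j+1} cⱼ`, where `[x,y] = xy - yx` is
the commutator of the normally ordered product.  Since the matrix `((-1)ʲ/(i+j+1))` is
invertible, the elements `∂^{n+j+1}cⱼ` are uniquely determined by the commutators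
`[∂ⁱa, b]`, `0 ≤ i ≤ n`. -/

theorem vertexAlgebra_commutators_determine_lambda_bracket
    {V : Type*} [AddCommGroup V] [Module ℂ V] (W : VertexAlgebra V)
    (a b : V) (n : ℕ) (c : ℕ → V)
    (hc : ∀ j : ℕ, j ≤ n → W.np (j : ℤ) a b = (Nat.factorial j : ℂ) • c j)
    (hvan : ∀ j : ℕ, n < j → W.np (j : ℤ) a b = 0) :
    (∀ i : ℕ, i ≤ n →
      (⇑W.T)^[n - i]
          (W.np (-1) ((⇑W.T)^[i] a) b - W.np (-1) b ((⇑W.T)^[i] a)) =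
        ∑ j ∈ Finset.range (n + 1),
          ((-1 : ℂ) ^ j / ((i : ℂ) + (j : ℂ) + 1)) • (⇑W.T)^[n + j + 1] (c j)) ∧
    (∀ d e : ℕ → V,
      (∀ i : ℕ, i ≤ n →
        ∑ j ∈ Finset.range (n + 1), ((-1 : ℂ) ^ j / ((i : ℂ) + (j : ℂ) + 1)) • d j =
        ∑ j ∈ Finset.range (n + 1), ((-1 : ℂ) ^ j / ((i : ℂ) + (j : ℂ) + 1)) • e j) →
      ∀ j : ℕ, j ≤ n → d j = e j) := by
  constructor
  · intro i hi
    have htrunc : ∀ m : ℕ, n + i + 1 ≤ m → W.np (m : ℤ) ((⇑W.T)^[i] a) b = 0 := by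
      intro m hm
      have h1 : m = (m - i) + i := by omega
      rw [h1, va_shift_iter W a b i (m - i), hvan (m - i) (by omega), smul_zero]
    have hq := W.quasicomm ((⇑W.T)^[i] a) b (n + i + 1) htrunc
    have hsum : ∑ m ∈ Finset.range (n + i + 1),
        ((-1 : ℂ) ^ m / (Nat.factorial (m + 1) : ℂ)) •
          (⇑W.T)^[m + 1] (W.np (m : ℤ) ((⇑W.T)^[i] a) b)
        = ∑ j ∈ Finset.range (n + 1),
          ((-1 : ℂ) ^ j / ((i : ℂ) + (j : ℂ) + 1)) • (⇑W.T)^[i + j + 1] (c j) := by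
      nth_rewrite 1 [Finset.range_eq_Ico]
      rw [← Finset.sum_Ico_consecutive _ (Nat.zero_le i) (by omega : i ≤ n + i + 1)]
      have h0 : ∑ m ∈ Finset.Ico 0 i, ((-1 : ℂ) ^ m / (Nat.factorial (m + 1) : ℂ)) •
          (⇑W.T)^[m + 1] (W.np (m : ℤ) ((⇑W.T)^[i] a) b) = 0 := by
        apply Finset.sum_eq_zero
        intro m hm
        rw [va_shift_small W a b i m (Finset.mem_Ico.mp hm).2, va_iter_zero, smul_zero]
      rw [h0, zero_add, Finset.sum_Ico_eq_sum_range]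
      have hlen : n + i + 1 - i = n + 1 := by omega
      rw [hlen]
      apply Finset.sum_congr rfl
      intro j hj
      have hj' : j ≤ n := Nat.lt_succ_iff.mp (Finset.mem_range.mp hj)
      have hnp : W.np ((i + j : ℕ) : ℤ) ((⇑W.T)^[i] a) b
          = ((((-1:ℂ)^i * (Nat.factorial (j+i) : ℂ) / (Nat.factorial j : ℂ))) *
              (Nat.factorial j : ℂ)) • c j := by
        rw [show i + j = j + i by omega, va_shift_iter W a b i j, hc j hj', smul_smul]
      rw [hnp, va_iter_smul, smul_smul]
      congr 1
      have hf1 : (Nat.factorial (i+j+1) : ℂ)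
          = (((j+i)+1 : ℕ) : ℂ) * (Nat.factorial (j+i) : ℂ) := by
        rw [show i+j+1 = (j+i)+1 by omega, Nat.factorial_succ]; push_cast; ring
      have h1 : (Nat.factorial (j+i) : ℂ) ≠ 0 := Nat.cast_ne_zero.mpr (Nat.factorial_ne_zero _)
      have h2 : (Nat.factorial j : ℂ) ≠ 0 := Nat.cast_ne_zero.mpr (Nat.factorial_ne_zero _)
      have h3 : ((i:ℂ) + (j:ℂ) + 1) ≠ 0 := by
        have hh : ((i:ℂ)+(j:ℂ)+1) = ((i+j+1 : ℕ) : ℂ) := by push_cast; ring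
        rw [hh]; exact Nat.cast_ne_zero.mpr (Nat.succ_ne_zero _)
      have hpow : ((-1:ℂ))^(i+j) * (-1:ℂ)^i = (-1:ℂ)^j := by
        rw [← pow_add, show i+j+i = 2*i+j by ring, pow_add, pow_mul]
        norm_num
      have h4 : ((j+i+1 : ℕ) : ℂ) = (i:ℂ)+(j:ℂ)+1 := by push_cast; ring
      rw [div_mul_cancel₀ _ h2, hf1, h4]
      rw [show (-1:ℂ)^(i+j) / (((i:ℂ)+(j:ℂ)+1) * (Nat.factorial (j+i) : ℂ)) *
            ((-1:ℂ)^i * (Nat.factorial (j+i) : ℂ))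
          = ((-1:ℂ)^(i+j) * (-1:ℂ)^i) *
            ((Nat.factorial (j+i) : ℂ) / ((Nat.factorial (j+i) : ℂ) * ((i:ℂ)+(j:ℂ)+1)))
        from by ring]
      rw [hpow, div_mul_cancel_left₀ h1, div_eq_mul_inv]
    rw [hq, hsum, ← Module.End.pow_apply, map_sum]
    apply Finset.sum_congr rfl
    intro j hj
    rw [map_smul, Module.End.pow_apply]
    congr 1
    rw [← Function.iterate_add_apply]
    congr 1
    omega
  · intro d e hde j hj
    have hsub : ∀ i : Fin (n+1), ∑ k : Fin (n+1),
        ((-1:ℂ)^(k:ℕ) / ((i:ℂ)+(k:ℂ)+1)) • (d (k:ℕ) - e (k:ℕ)) = 0 := by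
      intro i
      have h1 := hde (i : ℕ) (Fin.is_le i)
      rw [Finset.sum_range, Finset.sum_range] at h1
      simp only [smul_sub]
      rw [Finset.sum_sub_distrib, h1, sub_self]
    have h2 := va_module_inj n (fun k => d (k : ℕ) - e (k : ℕ)) hsub ⟨j, by omega⟩
    simpa [sub_eq_zero] using h2
end
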